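/- Let I = ⟨u_1,...,u_r⟩ be a complete intersection monomial ideal in a polynomial ring S over a field (so u_1,...,u_r are monomials forming a regular sequence with pairwise coprime supports). Then for all nonnegative integers b_1,...,b_r with ∑ b_i ≤ n, the colon ideal (I^n : u_1^{b_1}···u_r^{b_r}) equals I^{n − ∑ b_i}. -/

import Mathlib

open MvPolynomial Ideal Pointwise

set_option linter.unusedVariables false

namespace ColonCIAux

lemma exists_le_sum {ι : Type*} [DecidableEq ι] (s : Finset ι) (a : ι → ℕ) :
    ∀ m ≤ ∑ i ∈ s, a i, ∃ a' : ι → ℕ, (∀ i, a' i ≤ a i) ∧ ∑ i ∈ s, a' i = m := by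
  induction s using Finset.cons_induction with
  | empty =>
    intro m hm
    simp only [Finset.sum_empty, Nat.le_zero] at hm
    exact ⟨fun _ => 0, fun _ => Nat.zero_le _, by simp [hm]⟩
  | cons i s hi ih =>
    intro m hm
    rw [Finset.sum_cons] at hm
    obtain ⟨a'', h1, h2⟩ := ih (m - min m (a i)) (by omega)
    refine ⟨Function.update a'' i (min m (a i)), ?_, ?_⟩
    · intro j
      rcases eq_or_ne j i with rfl | hj
      · simp only [Function.update_self]; omega
      · simpa [Function.update_of_ne hj] using h1 j
    · rw [Finset.sum_cons, Function.update_self]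
      rw [Finset.sum_congr rfl
        (fun j hj => Function.update_of_ne (fun h : j = i => hi (h ▸ hj)) (m ⊓ a i) a''), h2]
      omega

lemma prod_monomial {K : Type*} [CommSemiring K] {σ : Type*} {ι : Type*} (s : Finset ι)
    (d : ι → (σ →₀ ℕ)) :
    ∏ i ∈ s, monomial (d i) (1 : K) = monomial (∑ i ∈ s, d i) 1 := by
  induction s using Finset.cons_induction with
  | empty => simp [monomial_zero']
  | cons i s hi ih =>
    rw [Finset.prod_cons, Finset.sum_cons, ih, monomial_mul, one_mul]

variable {K : Type*} [Field K] {σ : Type*} {r : ℕ} {e : Fin r → (σ →₀ ℕ)}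
  {u : Fin r → MvPolynomial σ K} {I : Ideal (MvPolynomial σ K)}

/-- The exponent of `∏ uₗ^{aₗ}`. -/
noncomputable def E (e : Fin r → (σ →₀ ℕ)) (a : Fin r → ℕ) : σ →₀ ℕ := ∑ l, a l • e l

lemma prod_u_pow (hu : ∀ l, u l = monomial (e l) 1) (a : Fin r → ℕ) :
    ∏ l, u l ^ a l = monomial (E e a) (1 : K) := by
  rw [E, ← prod_monomial]
  refine Finset.prod_congr rfl fun l _ => ?_
  rw [hu l, monomial_pow, one_pow]

lemma monomial_mem_pow (hu : ∀ l, u l = monomial (e l) 1)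
    (hI : I = Ideal.span (Set.range u)) (a : Fin r → ℕ) :
    monomial (E e a) (1 : K) ∈ I ^ (∑ l, a l) := by
  rw [← prod_u_pow hu, ← Finset.prod_pow_eq_pow_sum]
  exact Ideal.prod_mem_prod fun l _ =>
    Ideal.pow_mem_pow (hI ▸ Ideal.subset_span ⟨l, rfl⟩) _

/-- `I^n` is the monomial ideal with exponents `E e a`, `∑ a = n`. -/
lemma pow_eq (hu : ∀ l, u l = monomial (e l) 1)
    (hI : I = Ideal.span (Set.range u)) (n : ℕ) :
    I ^ n = Ideal.span
      ((fun d => monomial d (1 : K)) '' (E e '' {a | ∑ l, a l = n})) := by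
  refine le_antisymm ?_ ?_
  · induction n with
    | zero =>
      rw [pow_zero, Ideal.one_eq_top, top_le_iff, Ideal.eq_top_iff_one]
      exact Ideal.subset_span ⟨0, ⟨0, by simp, by simp [E]⟩, by simp [monomial_zero']⟩
    | succ n ih =>
      rw [pow_succ]
      calc I ^ n * I ≤ Ideal.span ((fun d => monomial d (1 : K)) '' (E e '' {a | ∑ l, a l = n}))
            * Ideal.span (Set.range u) := Ideal.mul_mono ih (le_of_eq hI)
        _ = Ideal.span (((fun d => monomial d (1 : K)) '' (E e '' {a | ∑ l, a l = n}))
            * Set.range u) := Ideal.span_mul_span' _ _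
        _ ≤ _ := by
            rw [Ideal.span_le]
            rintro x hx
            rw [Set.mem_mul] at hx
            obtain ⟨y, ⟨d, ⟨a, ha, rfl⟩, rfl⟩, z, ⟨l, rfl⟩, rfl⟩ := hx
            rw [hu l, monomial_mul, one_mul]
            refine Ideal.subset_span ⟨E e a + e l,
              ⟨a + fun j => if j = l then 1 else 0, ?_, ?_⟩, rfl⟩
            · have ha' : ∑ l, a l = n := ha
              simp only [Set.mem_setOf_eq, Pi.add_apply, Finset.sum_add_distrib, ha',
                Finset.sum_ite_eq' Finset.univ l (fun _ => 1), Finset.mem_univ, if_true]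
            · simp only [E, Pi.add_apply, add_smul, Finset.sum_add_distrib, ite_smul, one_smul,
                zero_smul, Finset.sum_ite_eq' Finset.univ l e, Finset.mem_univ, if_true]
  · rw [Ideal.span_le]
    rintro x ⟨d, ⟨a, ha, rfl⟩, rfl⟩
    exact ha ▸ monomial_mem_pow hu hI a

lemma E_apply (a : Fin r → ℕ) (i : σ) : E e a i = ∑ l, a l * e l i := by
  rw [E, Finsupp.finset_sum_apply]
  exact Finset.sum_congr rfl fun l _ => by rw [Finsupp.smul_apply, smul_eq_mul]

/-- The combinatorial core. -/
lemma key (hdisj : ∀ l l', l ≠ l' → Disjoint (e l).support (e l').support)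
    {c : σ →₀ ℕ} {a b : Fin r → ℕ} (hle : E e a ≤ c + E e b) :
    ∃ a'' : Fin r → ℕ, ∑ l, a'' l = ∑ l, a l - ∑ l, b l ∧ E e a'' ≤ c := by
  set a' : Fin r → ℕ := fun l => a l - b l with ha'
  have hEa' : E e a' ≤ c := by
    rw [Finsupp.le_def]
    intro i
    rw [E_apply]
    by_cases hex : ∃ l0, e l0 i ≠ 0
    · obtain ⟨l0, hl0⟩ := hex
      have hz : ∀ l, l ≠ l0 → e l i = 0 := by
        intro l hl
        by_contra h
        exact (Finset.disjoint_left.mp (hdisj l l0 hl)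
          (Finsupp.mem_support_iff.mpr h)) (Finsupp.mem_support_iff.mpr hl0)
      have hsum : ∀ (w : Fin r → ℕ), ∑ l, w l * e l i = w l0 * e l0 i := fun w =>
        Finset.sum_eq_single l0 (fun l _ hl => by rw [hz l hl, mul_zero])
          (fun h => absurd (Finset.mem_univ l0) h)
      have h1 := Finsupp.le_def.mp hle i
      rw [Finsupp.add_apply, E_apply, E_apply, hsum a, hsum b] at h1
      rw [hsum a']
      have : a' l0 * e l0 i = a l0 * e l0 i - b l0 * e l0 i := by
        rw [ha']; exact Nat.sub_mul _ _ _
      omega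
    · push_neg at hex
      simp [hex]
  have hsum' : ∑ l, a l - ∑ l, b l ≤ ∑ l, a' l := by
    have : ∑ l, a l ≤ ∑ l, (a' l + b l) :=
      Finset.sum_le_sum fun l _ => by simp only [ha']; omega
    rw [Finset.sum_add_distrib] at this
    omega
  obtain ⟨a'', h1, h2⟩ := exists_le_sum Finset.univ a' _ hsum'
  refine ⟨a'', h2, le_trans ?_ hEa'⟩
  rw [Finsupp.le_def]
  intro i
  rw [E_apply, E_apply]
  exact Finset.sum_le_sum fun l _ => Nat.mul_le_mul_right _ (h1 l)

end ColonCIAux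

/-- Colon of powers of a complete intersection monomial ideal:
the generators are monomials `u l = x^(e l)` with pairwise disjoint supports (pairwise
coprime), each nonconstant, so that they form a regular sequence.  Then
`(I^n : u_1^{b_1} ⋯ u_r^{b_r}) = I^{n - ∑ b_i}` whenever `∑ b_i ≤ n`. -/
theorem colon_pow_complete_intersection
    {K : Type*} [Field K] {σ : Type*} (r : ℕ) (e : Fin r → (σ →₀ ℕ))
    (he : ∀ l, e l ≠ 0)
    (hdisj : ∀ l l', l ≠ l' → Disjoint (e l).support (e l').support)
    (u : Fin r → MvPolynomial σ K) (hu : ∀ l, u l = monomial (e l) 1)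
    (I : Ideal (MvPolynomial σ K)) (hI : I = Ideal.span (Set.range u))
    (n : ℕ) (b : Fin r → ℕ) (hb : ∑ l, b l ≤ n) :
    Submodule.colon (I ^ n) (Ideal.span {∏ l, u l ^ b l}) = I ^ (n - ∑ l, b l) := by
  classical
  have hf : ∏ l, u l ^ b l = monomial (ColonCIAux.E e b) (1 : K) := ColonCIAux.prod_u_pow hu b
  ext g
  rw [← Ideal.submodule_span_eq, Submodule.mem_colon_span_singleton, smul_eq_mul]
  constructor
  · intro hg
    rw [hf, ColonCIAux.pow_eq hu hI, mem_ideal_span_monomial_image] at hg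
    rw [ColonCIAux.pow_eq hu hI, mem_ideal_span_monomial_image]
    intro c hc
    have hc' : c + ColonCIAux.E e b ∈ (g * monomial (ColonCIAux.E e b) (1 : K)).support := by
      rw [mem_support_iff, coeff_mul_monomial, mul_one]
      exact mem_support_iff.mp hc
    obtain ⟨d, ⟨a, ha, rfl⟩, hled⟩ := hg _ hc'
    obtain ⟨a'', h1, h2⟩ := ColonCIAux.key hdisj hled
    refine ⟨ColonCIAux.E e a'', ⟨a'', ?_, rfl⟩, h2⟩
    rw [Set.mem_setOf_eq] at ha ⊢
    rw [h1, ha]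
  · intro hg
    have hfmem : ∏ l, u l ^ b l ∈ I ^ (∑ l, b l) := by
      rw [hf]; exact ColonCIAux.monomial_mem_pow hu hI b
    have h := Ideal.mul_mem_mul hg hfmem
    rwa [← pow_add, Nat.sub_add_cancel hb] at h
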